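/- Let A be a block matrix A = [[A1, A2ᵀ],[A2, A3]] with A3 invertible, and let S = A1 - A2ᵀ A3⁻¹ A2 be the Schur complement. If A is invertible then S is invertible and ‖S⁻¹‖ ≤ ‖A⁻¹‖ ≤ (1+‖A2‖)²(1+‖A3⁻¹‖)²(1+‖S⁻¹‖). -/

import Mathlib

open scoped Matrix.Norms.L2Operator
open Matrix

set_option linter.unusedSectionVars false
set_option maxHeartbeats 1000000

section aux
variable {m₁ m₂ n₁ n₂ : Type*} [Fintype m₁] [Fintype m₂] [Fintype n₁] [Fintype n₂]
  [DecidableEq m₁] [DecidableEq m₂] [DecidableEq n₁] [DecidableEq n₂]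

private lemma euclid_norm_sq {ι : Type*} [Fintype ι] (x : EuclideanSpace ℂ ι) :
    ‖x‖ ^ 2 = ∑ i, ‖x i‖ ^ 2 := by
  rw [EuclideanSpace.norm_eq, Real.sq_sqrt (by positivity)]

private lemma norm_elim_sq (a : EuclideanSpace ℂ m₁) (b : EuclideanSpace ℂ m₂) :
    ‖(WithLp.equiv 2 ((m₁ ⊕ m₂) → ℂ)).symm
        (Sum.elim (WithLp.equiv 2 _ a) (WithLp.equiv 2 _ b))‖ ^ 2 = ‖a‖ ^ 2 + ‖b‖ ^ 2 := by
  simp only [euclid_norm_sq, WithLp.equiv_symm_apply, PiLp.toLp_apply, Fintype.sum_sum_type,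
    Sum.elim_inl, Sum.elim_inr]
  rfl

private lemma norm_elim_le (a : EuclideanSpace ℂ m₁) (b : EuclideanSpace ℂ m₂) :
    ‖(WithLp.equiv 2 ((m₁ ⊕ m₂) → ℂ)).symm
        (Sum.elim (WithLp.equiv 2 _ a) (WithLp.equiv 2 _ b))‖ ≤ ‖a‖ + ‖b‖ := by
  have h := norm_elim_sq a b
  nlinarith [norm_nonneg a, norm_nonneg b, norm_nonneg ((WithLp.equiv 2 ((m₁ ⊕ m₂) → ℂ)).symm
        (Sum.elim (WithLp.equiv 2 _ a) (WithLp.equiv 2 _ b)))]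

private lemma norm_left_le (a : EuclideanSpace ℂ m₁) (b : EuclideanSpace ℂ m₂) :
    ‖a‖ ≤ ‖(WithLp.equiv 2 ((m₁ ⊕ m₂) → ℂ)).symm
        (Sum.elim (WithLp.equiv 2 _ a) (WithLp.equiv 2 _ b))‖ := by
  have h := norm_elim_sq a b
  nlinarith [norm_nonneg a, norm_nonneg b, norm_nonneg ((WithLp.equiv 2 ((m₁ ⊕ m₂) → ℂ)).symm
        (Sum.elim (WithLp.equiv 2 _ a) (WithLp.equiv 2 _ b)))]

private lemma opnorm_le (M : Matrix m₁ n₁ ℂ) {c : ℝ} (hc : 0 ≤ c)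
    (h : ∀ x : EuclideanSpace ℂ n₁,
      ‖(WithLp.equiv 2 (m₁ → ℂ)).symm (M *ᵥ WithLp.equiv 2 _ x)‖ ≤ c * ‖x‖) :
    ‖M‖ ≤ c :=
  ContinuousLinearMap.opNorm_le_bound _ hc h

private lemma mulVec_le (M : Matrix m₁ n₁ ℂ) (x : EuclideanSpace ℂ n₁) :
    ‖(WithLp.equiv 2 (m₁ → ℂ)).symm (M *ᵥ WithLp.equiv 2 _ x)‖ ≤ ‖M‖ * ‖x‖ :=
  (LinearMap.toContinuousLinearMap (toEuclideanLin M)).le_opNorm x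

private lemma norm_fromBlocks_le (P : Matrix m₁ n₁ ℂ) (Q : Matrix m₁ n₂ ℂ)
    (R : Matrix m₂ n₁ ℂ) (T : Matrix m₂ n₂ ℂ) :
    ‖fromBlocks P Q R T‖ ≤ ‖P‖ + ‖Q‖ + ‖R‖ + ‖T‖ := by
  have hP := norm_nonneg P; have hQ := norm_nonneg Q
  have hR := norm_nonneg R; have hT := norm_nonneg T
  apply opnorm_le _ (by positivity)
  intro x
  set x₁ : EuclideanSpace ℂ n₁ :=
    (WithLp.equiv 2 _).symm (fun i => WithLp.equiv 2 _ x (Sum.inl i)) with hx₁def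
  set x₂ : EuclideanSpace ℂ n₂ :=
    (WithLp.equiv 2 _).symm (fun i => WithLp.equiv 2 _ x (Sum.inr i)) with hx₂def
  have hx : WithLp.equiv 2 ((n₁ ⊕ n₂) → ℂ) x
      = Sum.elim (WithLp.equiv 2 _ x₁) (WithLp.equiv 2 _ x₂) := by
    funext i; cases i <;> rfl
  have hx' : x = (WithLp.equiv 2 ((n₁ ⊕ n₂) → ℂ)).symm
      (Sum.elim (WithLp.equiv 2 _ x₁) (WithLp.equiv 2 _ x₂)) := by
    rw [← hx]; rfl
  have h1 : ‖x₁‖ ≤ ‖x‖ := by rw [hx']; exact norm_left_le x₁ x₂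
  have h2 : ‖x₂‖ ≤ ‖x‖ := by
    rw [hx']
    have := norm_elim_sq x₁ x₂
    nlinarith [norm_nonneg x₁, norm_nonneg x₂, norm_nonneg ((WithLp.equiv 2 ((n₁ ⊕ n₂) → ℂ)).symm
      (Sum.elim (WithLp.equiv 2 _ x₁) (WithLp.equiv 2 _ x₂)))]
  have hmv : fromBlocks P Q R T *ᵥ WithLp.equiv 2 _ x
      = Sum.elim (P *ᵥ WithLp.equiv 2 _ x₁ + Q *ᵥ WithLp.equiv 2 _ x₂)
                 (R *ᵥ WithLp.equiv 2 _ x₁ + T *ᵥ WithLp.equiv 2 _ x₂) := by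
    rw [hx, fromBlocks_mulVec, Sum.elim_comp_inl, Sum.elim_comp_inr]
  set u : EuclideanSpace ℂ m₁ :=
    (WithLp.equiv 2 _).symm (P *ᵥ WithLp.equiv 2 _ x₁ + Q *ᵥ WithLp.equiv 2 _ x₂) with hu
  set v : EuclideanSpace ℂ m₂ :=
    (WithLp.equiv 2 _).symm (R *ᵥ WithLp.equiv 2 _ x₁ + T *ᵥ WithLp.equiv 2 _ x₂) with hv
  have hrw : (WithLp.equiv 2 ((m₁ ⊕ m₂) → ℂ)).symm (fromBlocks P Q R T *ᵥ WithLp.equiv 2 _ x)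
      = (WithLp.equiv 2 ((m₁ ⊕ m₂) → ℂ)).symm
          (Sum.elim (WithLp.equiv 2 _ u) (WithLp.equiv 2 _ v)) := by
    rw [hmv]; rfl
  rw [hrw]
  have hun : ‖u‖ ≤ ‖P‖ * ‖x₁‖ + ‖Q‖ * ‖x₂‖ := by
    have : u = (WithLp.equiv 2 (m₁ → ℂ)).symm (P *ᵥ WithLp.equiv 2 _ x₁)
        + (WithLp.equiv 2 (m₁ → ℂ)).symm (Q *ᵥ WithLp.equiv 2 _ x₂) := rfl
    rw [this]
    exact (norm_add_le _ _).trans (add_le_add (mulVec_le P x₁) (mulVec_le Q x₂))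
  have hvn : ‖v‖ ≤ ‖R‖ * ‖x₁‖ + ‖T‖ * ‖x₂‖ := by
    have : v = (WithLp.equiv 2 (m₂ → ℂ)).symm (R *ᵥ WithLp.equiv 2 _ x₁)
        + (WithLp.equiv 2 (m₂ → ℂ)).symm (T *ᵥ WithLp.equiv 2 _ x₂) := rfl
    rw [this]
    exact (norm_add_le _ _).trans (add_le_add (mulVec_le R x₁) (mulVec_le T x₂))
  refine (norm_elim_le u v).trans ?_
  have hxn := norm_nonneg x
  nlinarith [norm_nonneg x₁, norm_nonneg x₂]

private lemma norm_block₁₁_le (P : Matrix m₁ n₁ ℂ) (Q : Matrix m₁ n₂ ℂ)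
    (R : Matrix m₂ n₁ ℂ) (T : Matrix m₂ n₂ ℂ) :
    ‖P‖ ≤ ‖fromBlocks P Q R T‖ := by
  apply opnorm_le _ (norm_nonneg _)
  intro x
  set y : EuclideanSpace ℂ (n₁ ⊕ n₂) :=
    (WithLp.equiv 2 _).symm (Sum.elim (WithLp.equiv 2 _ x)
      (WithLp.equiv 2 _ (0 : EuclideanSpace ℂ n₂))) with hy
  have hyn : ‖y‖ = ‖x‖ := by
    have h := norm_elim_sq x (0 : EuclideanSpace ℂ n₂)
    rw [← hy] at h
    simp only [norm_zero] at h
    nlinarith [norm_nonneg x, norm_nonneg y]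
  have hmv : fromBlocks P Q R T *ᵥ WithLp.equiv 2 _ y
      = Sum.elim (P *ᵥ WithLp.equiv 2 _ x) (R *ᵥ WithLp.equiv 2 _ x) := by
    have : WithLp.equiv 2 ((n₁ ⊕ n₂) → ℂ) y
        = Sum.elim (WithLp.equiv 2 _ x) (0 : n₂ → ℂ) := rfl
    rw [this, fromBlocks_mulVec, Sum.elim_comp_inl, Sum.elim_comp_inr, mulVec_zero,
      mulVec_zero, add_zero, add_zero]
  calc ‖(WithLp.equiv 2 (m₁ → ℂ)).symm (P *ᵥ WithLp.equiv 2 _ x)‖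
      ≤ ‖(WithLp.equiv 2 ((m₁ ⊕ m₂) → ℂ)).symm (fromBlocks P Q R T *ᵥ WithLp.equiv 2 _ y)‖ := by
        rw [hmv]
        exact norm_left_le ((WithLp.equiv 2 (m₁ → ℂ)).symm (P *ᵥ WithLp.equiv 2 _ x))
          ((WithLp.equiv 2 (m₂ → ℂ)).symm (R *ᵥ WithLp.equiv 2 _ x))
    _ ≤ ‖fromBlocks P Q R T‖ * ‖y‖ := mulVec_le _ y
    _ = ‖fromBlocks P Q R T‖ * ‖x‖ := by rw [hyn]

private lemma norm_map_star_le (M : Matrix m₁ n₁ ℂ) : ‖M.map star‖ ≤ ‖M‖ := by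
  apply opnorm_le _ (norm_nonneg _)
  intro x
  set y : EuclideanSpace ℂ n₁ :=
    (WithLp.equiv 2 _).symm (fun j => star (WithLp.equiv 2 _ x j)) with hy
  have hyn : ‖y‖ = ‖x‖ := by
    have h2 : ‖y‖ ^ 2 = ‖x‖ ^ 2 := by
      rw [euclid_norm_sq, euclid_norm_sq]
      exact Finset.sum_congr rfl fun i _ => by
        simp [hy, WithLp.equiv_symm_apply, PiLp.toLp_apply]
    nlinarith [norm_nonneg x, norm_nonneg y]
  have key : ∀ i, ‖(M.map star *ᵥ WithLp.equiv 2 _ x) i‖ = ‖(M *ᵥ WithLp.equiv 2 _ y) i‖ := by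
    intro i
    have : (M *ᵥ WithLp.equiv 2 _ y) i = star ((M.map star *ᵥ WithLp.equiv 2 _ x) i) := by
      simp only [Matrix.mulVec, dotProduct, Matrix.map_apply, star_sum, star_mul']
      exact Finset.sum_congr rfl fun j _ => by simp [hy, WithLp.equiv_symm_apply, PiLp.toLp_apply, mul_comm]
    rw [this, norm_star]
  have heq : ‖(WithLp.equiv 2 (m₁ → ℂ)).symm (M.map star *ᵥ WithLp.equiv 2 _ x)‖
      = ‖(WithLp.equiv 2 (m₁ → ℂ)).symm (M *ᵥ WithLp.equiv 2 _ y)‖ := by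
    have h2 : ‖(WithLp.equiv 2 (m₁ → ℂ)).symm (M.map star *ᵥ WithLp.equiv 2 _ x)‖ ^ 2
        = ‖(WithLp.equiv 2 (m₁ → ℂ)).symm (M *ᵥ WithLp.equiv 2 _ y)‖ ^ 2 := by
      rw [euclid_norm_sq, euclid_norm_sq]
      exact Finset.sum_congr rfl fun i _ => by
        simp only [WithLp.equiv_symm_apply, PiLp.toLp_apply]; rw [key i]
    nlinarith [norm_nonneg ((WithLp.equiv 2 (m₁ → ℂ)).symm (M.map star *ᵥ WithLp.equiv 2 _ x)),
      norm_nonneg ((WithLp.equiv 2 (m₁ → ℂ)).symm (M *ᵥ WithLp.equiv 2 _ y))]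
  rw [heq, ← hyn]
  exact mulVec_le M y

private lemma norm_transpose_le (M : Matrix m₁ n₁ ℂ) : ‖Mᵀ‖ ≤ ‖M‖ := by
  have h : Mᵀ = (M.map star)ᴴ := by
    ext i j; simp [Matrix.conjTranspose_apply, Matrix.map_apply]
  rw [h, Matrix.l2_opNorm_conjTranspose]
  exact norm_map_star_le M

end aux

/-- The ℓ²-operator norm of a (rectangular) complex matrix, defined as the operator
norm of the associated linear map between Euclidean spaces. -/
noncomputable def l2OpNorm {m n : Type*} [Fintype m] [Fintype n] [DecidableEq n]
    (M : Matrix m n ℂ) : ℝ :=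
  ‖LinearMap.toContinuousLinearMap (Matrix.toEuclideanLin M)‖

private lemma l2OpNorm_eq {m n : Type*} [Fintype m] [Fintype n] [DecidableEq n]
    (M : Matrix m n ℂ) : l2OpNorm M = ‖M‖ := rfl

/-- For a block matrix `A = [[A1, A2ᵀ], [A2, A3]]` with `A3` invertible and
`S = A1 - A2ᵀ A3⁻¹ A2` the Schur complement: if `A` is invertible then `S` is
invertible and `‖S⁻¹‖ ≤ ‖A⁻¹‖ ≤ (1+‖A2‖)²(1+‖A3⁻¹‖)²(1+‖S⁻¹‖)`. -/
theorem schur_inverse_norm_bound (k n : ℕ)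
    (A1 : Matrix (Fin k) (Fin k) ℂ) (A2 : Matrix (Fin n) (Fin k) ℂ)
    (A3 : Matrix (Fin n) (Fin n) ℂ) (h3 : IsUnit A3.det)
    (hA : IsUnit (Matrix.fromBlocks A1 A2.transpose A2 A3).det) :
    IsUnit (A1 - A2.transpose * A3⁻¹ * A2).det ∧
    l2OpNorm ((A1 - A2.transpose * A3⁻¹ * A2)⁻¹)
      ≤ l2OpNorm ((Matrix.fromBlocks A1 A2.transpose A2 A3)⁻¹) ∧
    l2OpNorm ((Matrix.fromBlocks A1 A2.transpose A2 A3)⁻¹)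
      ≤ (1 + l2OpNorm A2) ^ 2 * (1 + l2OpNorm A3⁻¹) ^ 2 *
        (1 + l2OpNorm ((A1 - A2.transpose * A3⁻¹ * A2)⁻¹)) := by
  classical
  simp only [l2OpNorm_eq]
  set B := A2.transpose with hB
  set S := A1 - B * A3⁻¹ * A2 with hS
  -- invertibility of the Schur complement
  letI iA3 : Invertible A3 := A3.invertibleOfIsUnitDet h3
  have hinv3 : ⅟A3 = A3⁻¹ := invOf_eq_nonsing_inv A3
  have hdet : (fromBlocks A1 B A2 A3).det = A3.det * S.det := by
    rw [det_fromBlocks₂₂, hinv3]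
  have hSdet : IsUnit S.det := by
    rw [hdet] at hA
    exact (IsUnit.mul_iff.mp hA).2
  -- the explicit block inverse
  have hS1 : S * S⁻¹ = 1 := mul_nonsing_inv _ hSdet
  have h31 : A3 * A3⁻¹ = 1 := mul_nonsing_inv _ h3
  have hA1S : A1 * S⁻¹ = 1 + B * A3⁻¹ * A2 * S⁻¹ := by
    have h := hS1
    rw [hS, Matrix.sub_mul] at h
    exact eq_add_of_sub_eq h
  have key : (fromBlocks A1 B A2 A3)⁻¹
      = fromBlocks S⁻¹ (-(S⁻¹ * B * A3⁻¹)) (-(A3⁻¹ * A2 * S⁻¹))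
          (A3⁻¹ + A3⁻¹ * A2 * S⁻¹ * B * A3⁻¹) := by
    apply inv_eq_right_inv
    rw [fromBlocks_multiply]
    have e11 : A1 * S⁻¹ + B * -(A3⁻¹ * A2 * S⁻¹) = 1 := by
      simp only [Matrix.mul_neg, ← Matrix.mul_assoc]
      rw [hA1S]; abel
    have e12 : A1 * -(S⁻¹ * B * A3⁻¹) + B * (A3⁻¹ + A3⁻¹ * A2 * S⁻¹ * B * A3⁻¹) = 0 := by
      simp only [Matrix.mul_neg, Matrix.mul_add, ← Matrix.mul_assoc]
      rw [hA1S]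
      simp only [Matrix.add_mul, Matrix.one_mul]
      abel
    have e21 : A2 * S⁻¹ + A3 * -(A3⁻¹ * A2 * S⁻¹) = 0 := by
      simp only [Matrix.mul_neg, ← Matrix.mul_assoc]
      rw [h31]
      simp only [Matrix.one_mul]
      abel
    have e22 : A2 * -(S⁻¹ * B * A3⁻¹) + A3 * (A3⁻¹ + A3⁻¹ * A2 * S⁻¹ * B * A3⁻¹) = 1 := by
      simp only [Matrix.mul_neg, Matrix.mul_add, ← Matrix.mul_assoc]
      rw [h31]
      simp only [Matrix.one_mul]
      abel
    rw [e11, e12, e21, e22, fromBlocks_one]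
  refine ⟨hSdet, ?_, ?_⟩
  · rw [key]
    exact norm_block₁₁_le _ _ _ _
  · rw [key]
    have hb : ‖B‖ ≤ ‖A2‖ := norm_transpose_le A2
    have ha0 := norm_nonneg A2
    have hb0 := norm_nonneg B
    have hc0 := norm_nonneg A3⁻¹
    have hs0 := norm_nonneg S⁻¹
    have n2 : ‖-(S⁻¹ * B * A3⁻¹)‖ ≤ ‖S⁻¹‖ * ‖B‖ * ‖A3⁻¹‖ := by
      rw [norm_neg]
      calc ‖S⁻¹ * B * A3⁻¹‖ ≤ ‖S⁻¹ * B‖ * ‖A3⁻¹‖ := l2_opNorm_mul _ _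
        _ ≤ ‖S⁻¹‖ * ‖B‖ * ‖A3⁻¹‖ :=
          mul_le_mul_of_nonneg_right (l2_opNorm_mul _ _) hc0
    have n3 : ‖-(A3⁻¹ * A2 * S⁻¹)‖ ≤ ‖A3⁻¹‖ * ‖A2‖ * ‖S⁻¹‖ := by
      rw [norm_neg]
      calc ‖A3⁻¹ * A2 * S⁻¹‖ ≤ ‖A3⁻¹ * A2‖ * ‖S⁻¹‖ := l2_opNorm_mul _ _
        _ ≤ ‖A3⁻¹‖ * ‖A2‖ * ‖S⁻¹‖ :=
          mul_le_mul_of_nonneg_right (l2_opNorm_mul _ _) hs0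
    have n4 : ‖A3⁻¹ + A3⁻¹ * A2 * S⁻¹ * B * A3⁻¹‖
        ≤ ‖A3⁻¹‖ + ‖A3⁻¹‖ * ‖A2‖ * ‖S⁻¹‖ * ‖B‖ * ‖A3⁻¹‖ := by
      refine (norm_add_le _ _).trans (add_le_add_right ?_ _)
      calc ‖A3⁻¹ * A2 * S⁻¹ * B * A3⁻¹‖
          ≤ ‖A3⁻¹ * A2 * S⁻¹ * B‖ * ‖A3⁻¹‖ := l2_opNorm_mul _ _
        _ ≤ ‖A3⁻¹ * A2 * S⁻¹‖ * ‖B‖ * ‖A3⁻¹‖ :=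
          mul_le_mul_of_nonneg_right (l2_opNorm_mul _ _) hc0
        _ ≤ ‖A3⁻¹ * A2‖ * ‖S⁻¹‖ * ‖B‖ * ‖A3⁻¹‖ :=
          mul_le_mul_of_nonneg_right
            (mul_le_mul_of_nonneg_right (l2_opNorm_mul _ _) hb0) hc0
        _ ≤ ‖A3⁻¹‖ * ‖A2‖ * ‖S⁻¹‖ * ‖B‖ * ‖A3⁻¹‖ :=
          mul_le_mul_of_nonneg_right (mul_le_mul_of_nonneg_right
            (mul_le_mul_of_nonneg_right (l2_opNorm_mul _ _) hs0) hb0) hc0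
    refine (norm_fromBlocks_le _ _ _ _).trans ?_
    set a := ‖A2‖
    set b := ‖B‖
    set c := ‖A3⁻¹‖
    set s := ‖S⁻¹‖
    have h24 : ‖-(S⁻¹ * B * A3⁻¹)‖ + ‖-(A3⁻¹ * A2 * S⁻¹)‖
        + ‖A3⁻¹ + A3⁻¹ * A2 * S⁻¹ * B * A3⁻¹‖
        ≤ s * b * c + c * a * s + (c + c * a * s * b * c) := by
      have := add_le_add (add_le_add n2 n3) n4
      linarith
    have hfin : s + (s * b * c + c * a * s + (c + c * a * s * b * c))
        ≤ (1 + a) ^ 2 * (1 + c) ^ 2 * (1 + s) := by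
      nlinarith [mul_nonneg hs0 (mul_nonneg ha0 hc0), mul_nonneg hc0 (mul_nonneg ha0 hs0),
        mul_nonneg (mul_nonneg hs0 hc0) (sub_nonneg.mpr hb),
        mul_nonneg (mul_nonneg (mul_nonneg hc0 ha0) (mul_nonneg hs0 hc0)) (sub_nonneg.mpr hb),
        mul_nonneg ha0 hc0, mul_nonneg ha0 hs0, mul_nonneg hc0 hs0,
        mul_nonneg (mul_nonneg ha0 ha0) (mul_nonneg hc0 hc0),
        mul_nonneg (mul_nonneg ha0 ha0) hc0, mul_nonneg ha0 (mul_nonneg hc0 hc0),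
        mul_nonneg (mul_nonneg ha0 ha0) hs0, mul_nonneg (mul_nonneg hc0 hc0) hs0,
        mul_nonneg (mul_nonneg ha0 (mul_nonneg ha0 hc0)) hs0,
        mul_nonneg (mul_nonneg ha0 (mul_nonneg hc0 hc0)) hs0,
        mul_nonneg (mul_nonneg (mul_nonneg ha0 ha0) (mul_nonneg hc0 hc0)) hs0]
    linarith
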